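/- Consider the RMSProp normalized dynamics λ_{t+1} = (1 - ηλ_t)^{k-2} λ_t / √(β₂ + (1-β₂)(1-ηλ_t)^{2k-2} x_t² λ_t²) with x_{t+1} = (1 - ηλ_t)x_t, k ≥ 4 even, η > 0, 0 < β₂ < 1. If η λ₀ < 1, x₀ > 0, and √β₂ > (k-2)^{k-2}/(k-1)^{k-1}, then |x_t| is eventually strictly decreasing and x_t → 0. -/

import Mathlib

open Filter

lemma amgm_key (n : ℕ) (hn : 1 ≤ n) {u : ℝ} (hu0 : 0 ≤ u) (hu1 : u ≤ 1) :
    (1 - u) ^ n * u ≤ (n : ℝ) ^ n / ((n : ℝ) + 1) ^ (n + 1) := by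
  set t : ℝ := 1 - u with ht
  have ht0 : 0 ≤ t := by simp [ht]; linarith
  have hn0 : (0:ℝ) < n := by exact_mod_cast hn
  have hb : (0:ℝ) < (n:ℝ) + 1 := by positivity
  have hw : (n:ℝ)/((n:ℝ)+1) + 1/((n:ℝ)+1) = 1 := by field_simp
  have h := Real.geom_mean_le_arith_mean2_weighted
    (by positivity : (0:ℝ) ≤ (n:ℝ)/((n:ℝ)+1)) (by positivity : (0:ℝ) ≤ 1/((n:ℝ)+1))
    ht0 (by positivity : (0:ℝ) ≤ (n:ℝ) * u) hw
  have hrhs : (n:ℝ)/((n:ℝ)+1) * t + 1/((n:ℝ)+1) * ((n:ℝ)*u) = (n:ℝ)/((n:ℝ)+1) := by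
    field_simp [ht]; ring
  rw [hrhs] at h
  have h2 := pow_le_pow_left₀ (by positivity) h (n+1)
  have hL : (t ^ ((n:ℝ)/((n:ℝ)+1)) * ((n:ℝ)*u) ^ ((1:ℝ)/((n:ℝ)+1))) ^ (n+1)
      = t ^ n * ((n:ℝ)*u) := by
    rw [mul_pow, ← Real.rpow_natCast (t ^ ((n:ℝ)/((n:ℝ)+1))) (n+1),
      ← Real.rpow_natCast (((n:ℝ)*u) ^ ((1:ℝ)/((n:ℝ)+1))) (n+1),
      ← Real.rpow_mul ht0, ← Real.rpow_mul (by positivity)]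
    push_cast
    rw [div_mul_cancel₀ _ hb.ne', one_div, inv_mul_cancel₀ hb.ne',
      Real.rpow_natCast, Real.rpow_one]
  rw [hL] at h2
  have key : t ^ n * u ≤ ((n:ℝ)/((n:ℝ)+1)) ^ (n+1) / n := by
    rw [le_div_iff₀ hn0]
    calc t ^ n * u * n = t ^ n * ((n:ℝ)*u) := by ring
    _ ≤ _ := h2
  refine key.trans (le_of_eq ?_)
  rw [div_pow, pow_succ ((n:ℝ)) n]
  field_simp

theorem stmt_9 (k : ℕ) (hk : 4 ≤ k) (hke : Even k) (η β₂ : ℝ) (hη : 0 < η)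
    (hβ : 0 < β₂) (hβ1 : β₂ < 1) (lam x : ℕ → ℝ)
    (hlam : ∀ t, lam (t + 1) =
      (1 - η * lam t) ^ (k - 2) * lam t /
        Real.sqrt (β₂ + (1 - β₂) * (1 - η * lam t) ^ (2 * k - 2) * (x t) ^ 2 * (lam t) ^ 2))
    (hx : ∀ t, x (t + 1) = (1 - η * lam t) * x t)
    (h0 : η * lam 0 < 1) (hl0 : 0 < lam 0) (hx0 : 0 < x 0)
    (hs : ((k : ℝ) - 2) ^ (k - 2) / ((k : ℝ) - 1) ^ (k - 1) < Real.sqrt β₂) :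
    (∃ T : ℕ, ∀ t ≥ T, |x (t + 1)| < |x t|) ∧ Tendsto x atTop (nhds 0) := by
  have hsb : 0 < Real.sqrt β₂ := Real.sqrt_pos.mpr hβ
  have hs1 : Real.sqrt β₂ < 1 := by
    rw [show (1:ℝ) = Real.sqrt 1 by simp]
    exact Real.sqrt_lt_sqrt hβ.le hβ1
  have hkc : ((k - 2 : ℕ) : ℝ) = (k:ℝ) - 2 := by
    have : (2:ℕ) ≤ k := by omega
    push_cast [Nat.cast_sub this]; ring
  have hksucc : (k - 2) + 1 = k - 1 := by omega
  -- the key inequality, in the form needed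
  have keyM : ∀ u : ℝ, 0 ≤ u → u ≤ 1 →
      (1 - u) ^ (k - 2) * u ≤ ((k : ℝ) - 2) ^ (k - 2) / ((k : ℝ) - 1) ^ (k - 1) := by
    intro u hu0 hu1
    have h := amgm_key (k - 2) (by omega) hu0 hu1
    rwa [hkc, show ((k:ℝ) - 2) + 1 = (k:ℝ) - 1 by ring, hksucc] at h
  -- the invariant
  have inv : ∀ t, 0 < lam t ∧ η * lam t < 1 ∧ 0 < x t := by
    intro t
    induction t with
    | zero => exact ⟨hl0, h0, hx0⟩
    | succ t ih =>
      obtain ⟨hl, hu, hxp⟩ := ih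
      have hu0 : 0 ≤ η * lam t := (mul_pos hη hl).le
      have h1u : 0 < 1 - η * lam t := by linarith
      have h1β : (0:ℝ) ≤ 1 - β₂ := by linarith
      set A := β₂ + (1 - β₂) * (1 - η * lam t) ^ (2 * k - 2) * (x t) ^ 2 * (lam t) ^ 2 with hA
      have hAnn : 0 ≤ (1 - β₂) * (1 - η * lam t) ^ (2 * k - 2) * (x t) ^ 2 * (lam t) ^ 2 :=
        mul_nonneg (mul_nonneg (mul_nonneg h1β (pow_nonneg h1u.le _)) (sq_nonneg _)) (sq_nonneg _)
      have hDge : Real.sqrt β₂ ≤ Real.sqrt A := Real.sqrt_le_sqrt (by linarith)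
      have hD0 : 0 < Real.sqrt A := lt_of_lt_of_le hsb hDge
      have hlpos : 0 < lam (t + 1) := by
        rw [hlam t]; exact div_pos (mul_pos (pow_pos h1u _) hl) hD0
      refine ⟨hlpos, ?_, ?_⟩
      · have hkey := keyM (η * lam t) hu0 (by linarith)
        have heq : η * lam (t + 1) = (1 - η * lam t) ^ (k - 2) * (η * lam t) / Real.sqrt A := by
          rw [hlam t]; ring
        rw [heq]
        have hnum : (0:ℝ) ≤ (1 - η * lam t) ^ (k - 2) * (η * lam t) :=
          mul_nonneg (pow_nonneg h1u.le _) hu0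
        have hk2 : (0:ℝ) ≤ (k:ℝ) - 2 := by
          have : (4:ℝ) ≤ (k:ℝ) := by exact_mod_cast hk
          linarith
        have hk1 : (0:ℝ) ≤ (k:ℝ) - 1 := by linarith
        have hM0 : (0:ℝ) ≤ ((k : ℝ) - 2) ^ (k - 2) / ((k : ℝ) - 1) ^ (k - 1) :=
          div_nonneg (pow_nonneg hk2 _) (pow_nonneg hk1 _)
        calc (1 - η * lam t) ^ (k - 2) * (η * lam t) / Real.sqrt A
            ≤ (((k : ℝ) - 2) ^ (k - 2) / ((k : ℝ) - 1) ^ (k - 1)) / Real.sqrt β₂ :=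
              div_le_div₀ hM0 hkey hsb hDge
          _ < 1 := (div_lt_one hsb).mpr hs
      · rw [hx t]; exact mul_pos h1u hxp
  have hxdec : ∀ t, x (t + 1) < x t := by
    intro t
    obtain ⟨hl, hu, hxp⟩ := inv t
    rw [hx t]
    nlinarith [mul_pos hη hl]
  refine ⟨⟨0, fun t _ => by
      rw [abs_of_pos (inv (t+1)).2.2, abs_of_pos (inv t).2.2]; exact hxdec t⟩, ?_⟩
  -- convergence
  have hanti : Antitone x := antitone_nat_of_succ_le fun t => (hxdec t).le
  have hbdd : BddBelow (Set.range x) := ⟨0, by rintro y ⟨t, rfl⟩; exact (inv t).2.2.le⟩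
  have hL : Tendsto x atTop (nhds (⨅ t, x t)) := tendsto_atTop_ciInf hanti hbdd
  set L := ⨅ t, x t with hLdef
  have hL0 : 0 ≤ L := le_ciInf fun t => (inv t).2.2.le
  suffices hLz : L = 0 by rwa [hLz] at hL
  by_contra hne
  have hLpos : 0 < L := lt_of_le_of_ne hL0 (Ne.symm hne)
  have hLle : ∀ t, L ≤ x t := fun t => ciInf_le hbdd t
  have hx1 : Tendsto (fun t => x (t + 1)) atTop (nhds L) :=
    hL.comp (tendsto_add_atTop_nat 1)
  have hratio : Tendsto (fun t => x (t + 1) / x t) atTop (nhds 1) := by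
    have := hx1.div hL hLpos.ne'
    rw [div_self hLpos.ne'] at this
    exact this
  have hueq : (fun t => η * lam t) = fun t => 1 - x (t + 1) / x t := by
    funext t
    rw [hx t, mul_div_assoc, div_self (inv t).2.2.ne', mul_one]
    ring
  have hu0 : Tendsto (fun t => η * lam t) atTop (nhds 0) := by
    rw [hueq]
    simpa using (tendsto_const_nhds (x := (1:ℝ))).sub hratio
  have hlam0 : Tendsto lam atTop (nhds 0) := by
    have h := hu0.const_mul (1/η)
    have : (fun t => (1/η) * (η * lam t)) = lam := by
      funext t; field_simp
    rw [this] at h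
    simpa using h
  have hz : Tendsto (fun t => lam t * x t) atTop (nhds 0) := by
    simpa using hlam0.mul hL
  have h1lim : Tendsto (fun t => 1 - η * lam t) atTop (nhds 1) := by
    simpa using (tendsto_const_nhds (x := (1:ℝ))).sub hu0
  have hAlim : Tendsto
      (fun t => β₂ + (1 - β₂) * (1 - η * lam t) ^ (2 * k - 2) * (x t) ^ 2 * (lam t) ^ 2)
      atTop (nhds β₂) := by
    have h := ((((tendsto_const_nhds (x := 1 - β₂)).mul (h1lim.pow (2*k - 2))).mul
      (hL.pow 2)).mul (hlam0.pow 2))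
    have h2 := (tendsto_const_nhds (x := β₂)).add h
    simpa using h2
  have hflim : Tendsto (fun t => (1 - η * lam t) ^ (k - 1) /
      Real.sqrt (β₂ + (1 - β₂) * (1 - η * lam t) ^ (2 * k - 2) * (x t) ^ 2 * (lam t) ^ 2))
      atTop (nhds (1 / Real.sqrt β₂)) := by
    have := (h1lim.pow (k - 1)).div hAlim.sqrt hsb.ne'
    rw [one_pow] at this
    exact this
  have hgt1 : (1:ℝ) < 1 / Real.sqrt β₂ := one_lt_one_div hsb hs1
  obtain ⟨T, hT⟩ := eventually_atTop.mp (hflim.eventually_const_le hgt1)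
  -- z is increasing beyond T
  have hzrec : ∀ t, lam (t + 1) * x (t + 1) =
      ((1 - η * lam t) ^ (k - 1) /
        Real.sqrt (β₂ + (1 - β₂) * (1 - η * lam t) ^ (2 * k - 2) * (x t) ^ 2 * (lam t) ^ 2)) *
        (lam t * x t) := by
    intro t
    rw [hlam t, hx t]
    rw [show (1 - η * lam t) ^ (k - 1) = (1 - η * lam t) ^ (k - 2) * (1 - η * lam t) by
      rw [← pow_succ, hksucc]]
    ring
  have hzT : 0 < lam T * x T := mul_pos (inv T).1 (inv T).2.2
  have hmono : ∀ t, T ≤ t → lam T * x T ≤ lam t * x t := by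
    intro t ht
    induction t, ht using Nat.le_induction with
    | base => exact le_rfl
    | succ n hn ih =>
      rw [hzrec n]
      have hzn : 0 < lam n * x n := mul_pos (inv n).1 (inv n).2.2
      calc lam T * x T ≤ lam n * x n := ih
        _ = 1 * (lam n * x n) := (one_mul _).symm
        _ ≤ _ := mul_le_mul_of_nonneg_right (hT n hn) hzn.le
  obtain ⟨N, hN⟩ := eventually_atTop.mp (hz.eventually_lt_const hzT)
  have h1 := hN (max N T) (le_max_left _ _)
  have h2 := hmono (max N T) (le_max_right _ _)
  linarith
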